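/- Suppose condition (I¹_{ρ₁,ρ₂}) holds for some ρ₁, ρ₂ > 0. Then for every (u,v) ∈ K satisfying either (‖u‖ = ρ₁ and ‖v‖ ≤ ρ₂) or (‖v‖ = ρ₂ and ‖u‖ ≤ ρ₁), and for every real μ ≥ 1, one has μ·(u,v) ≠ T(u,v). -/

import Mathlib

open MeasureTheory Set

/-- Supremum norm of `u` on `[0,1]`. -/
noncomputable def nrm (u : ℝ → ℝ) : ℝ := sSup ((fun t => |u t|) '' Icc (0:ℝ) 1)

/-- Minimum (infimum) of `u` on `[a,b]`. -/
noncomputable def minOnIcc (u : ℝ → ℝ) (a b : ℝ) : ℝ := sInf (u '' Icc a b)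

/-- `i`-th component of the system operator `T`. -/
noncomputable def Tsys (k : Fin 2 → ℝ → ℝ → ℝ) (g : Fin 2 → ℝ → ℝ)
    (f : Fin 2 → ℝ → ℝ → ℝ → ℝ) (γ : Fin 2 → Fin 2 → ℝ → ℝ)
    (H : Fin 2 → Fin 2 → (ℝ → ℝ) → (ℝ → ℝ) → ℝ)
    (i : Fin 2) (u v : ℝ → ℝ) (t : ℝ) : ℝ :=
  γ i 0 t * H i 0 u v + γ i 1 t * H i 1 u v +
    ∫ s in (0:ℝ)..1, k i t s * g i s * f i s (u s) (v s)

/-- Condition (I¹_{ρ₁,ρ₂}) for systems. -/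
def CondI1sys (k : Fin 2 → ℝ → ℝ → ℝ) (g : Fin 2 → ℝ → ℝ)
    (f : Fin 2 → ℝ → ℝ → ℝ → ℝ) (γ : Fin 2 → Fin 2 → ℝ → ℝ)
    (H : Fin 2 → Fin 2 → (ℝ → ℝ) → (ℝ → ℝ) → ℝ)
    (K : Set ((ℝ → ℝ) × (ℝ → ℝ))) (ρ : Fin 2 → ℝ) : Prop :=
  ∃ μ : Fin 2 → Fin 2 → Fin 2 → Measure ℝ,
    (∀ i j l, IsFiniteMeasure (μ i j l) ∧ μ i j l ((Icc (0:ℝ) 1)ᶜ) = 0) ∧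
    (∀ i j l, (∫ t, γ i j t ∂(μ i j l)) < 1) ∧
    (∀ i : Fin 2,
      0 < (1 - ∫ t, γ i 0 t ∂(μ i 0 i)) * (1 - ∫ t, γ i 1 t ∂(μ i 1 i)) -
        (∫ t, γ i 1 t ∂(μ i 0 i)) * (∫ t, γ i 0 t ∂(μ i 1 i))) ∧
    (∀ i j, ∀ w ∈ K,
      ((nrm w.1 = ρ 0 ∧ nrm w.2 ≤ ρ 1) ∨ (nrm w.2 = ρ 1 ∧ nrm w.1 ≤ ρ 0)) →
      H i j w.1 w.2 ≤ (∫ t, w.1 t ∂(μ i j 0)) + ∫ t, w.2 t ∂(μ i j 1)) ∧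
    ∃ fb : Fin 2 → ℝ,
      (∀ i, ∀ᵐ t ∂(volume.restrict (Icc (0:ℝ) 1)),
        ∀ x ∈ Icc (-(ρ 0)) (ρ 0), ∀ y ∈ Icc (-(ρ 1)) (ρ 1), f i t x y ≤ fb i * ρ i) ∧
      (∀ i l : Fin 2, l ≠ i →
        (let D := (1 - ∫ t, γ i 0 t ∂(μ i 0 i)) * (1 - ∫ t, γ i 1 t ∂(μ i 1 i)) -
            (∫ t, γ i 1 t ∂(μ i 0 i)) * (∫ t, γ i 0 t ∂(μ i 1 i));
        let θ1 := (1 - ∫ t, γ i 1 t ∂(μ i 1 i)) / D;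
        let θ2 := (∫ t, γ i 1 t ∂(μ i 0 i)) / D;
        let θ3 := (∫ t, γ i 0 t ∂(μ i 1 i)) / D;
        let θ4 := (1 - ∫ t, γ i 0 t ∂(μ i 0 i)) / D;
        let Qi := ρ l / ρ i * ((∫ t, γ i 0 t ∂(μ i 0 i)) * ((μ i 0 l) univ).toReal +
            (∫ t, γ i 1 t ∂(μ i 0 i)) * ((μ i 1 l) univ).toReal);
        let Si := ρ l / ρ i * ((∫ t, γ i 0 t ∂(μ i 1 i)) * ((μ i 0 l) univ).toReal +
            (∫ t, γ i 1 t ∂(μ i 1 i)) * ((μ i 1 l) univ).toReal);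
        fb i * ((nrm (γ i 0) * θ1 + nrm (γ i 1) * θ3) *
              (∫ s in (0:ℝ)..1, (∫ t, k i t s ∂(μ i 0 i)) * g i s) +
            (nrm (γ i 0) * θ2 + nrm (γ i 1) * θ4) *
              (∫ s in (0:ℝ)..1, (∫ t, k i t s ∂(μ i 1 i)) * g i s) +
            sSup ((fun t => ∫ s in (0:ℝ)..1, |k i t s| * g i s) '' Icc (0:ℝ) 1)) +
          nrm (γ i 0) * (θ1 * Qi + θ2 * Si) + nrm (γ i 1) * (θ3 * Qi + θ4 * Si) +
          ρ l / ρ i * (nrm (γ i 0) * ((μ i 0 l) univ).toReal +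
            nrm (γ i 1) * ((μ i 1 l) univ).toReal) < 1))

open Function
section Helpers

noncomputable def extIcc (u : ℝ → ℝ) : ℝ → ℝ :=
  Set.IccExtend (by norm_num : (0:ℝ) ≤ 1) ((Icc (0:ℝ) 1).restrict u)

lemma extIcc_cont {u : ℝ → ℝ} (hu : ContinuousOn u (Icc (0:ℝ) 1)) : Continuous (extIcc u) :=
  (continuousOn_iff_continuous_restrict.mp hu).Icc_extend'

lemma extIcc_eq (u : ℝ → ℝ) {t : ℝ} (ht : t ∈ Icc (0:ℝ) 1) : extIcc u t = u t := by
  rw [extIcc, Set.IccExtend_of_mem _ _ ht]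
  rfl

lemma nrm_bddAbove {u : ℝ → ℝ} (hu : ContinuousOn u (Icc (0:ℝ) 1)) :
    BddAbove ((fun t => |u t|) '' Icc (0:ℝ) 1) :=
  (isCompact_Icc.image_of_continuousOn hu.abs).bddAbove

lemma nrm_ge {u : ℝ → ℝ} (hu : ContinuousOn u (Icc (0:ℝ) 1)) {t : ℝ}
    (ht : t ∈ Icc (0:ℝ) 1) : |u t| ≤ nrm u :=
  le_csSup (nrm_bddAbove hu) ⟨t, ht, rfl⟩

lemma nrm_nonneg {u : ℝ → ℝ} (hu : ContinuousOn u (Icc (0:ℝ) 1)) : 0 ≤ nrm u :=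
  le_trans (abs_nonneg _) (nrm_ge hu (by norm_num : (0:ℝ) ∈ Icc (0:ℝ) 1))

lemma nrm_exists_max {u : ℝ → ℝ} (hu : ContinuousOn u (Icc (0:ℝ) 1)) :
    ∃ t ∈ Icc (0:ℝ) 1, |u t| = nrm u := by
  have h := (isCompact_Icc.image_of_continuousOn hu.abs).sSup_mem
    (Set.Nonempty.image _ (by norm_num : (Icc (0:ℝ) 1).Nonempty))
  obtain ⟨t, ht, he⟩ := h
  exact ⟨t, ht, he⟩

lemma nrm_eq {u : ℝ → ℝ} {r : ℝ} (hb : ∀ t ∈ Icc (0:ℝ) 1, |u t| ≤ r)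
    (hat : ∃ t ∈ Icc (0:ℝ) 1, |u t| = r) : nrm u = r := by
  obtain ⟨t0, ht0, h0⟩ := hat
  refine le_antisymm (csSup_le (Set.Nonempty.image _ ⟨0, by norm_num⟩) ?_) ?_
  · rintro x ⟨t, ht, rfl⟩; exact hb t ht
  · exact h0 ▸ le_csSup ⟨r, by rintro x ⟨t, ht, rfl⟩; exact hb t ht⟩ ⟨t0, ht0, rfl⟩

lemma nrm_zero : nrm (fun _ : ℝ => (0:ℝ)) = 0 :=
  nrm_eq (fun t _ => by simp) ⟨0, by norm_num, by simp⟩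

lemma minOn_zero {aa bb : ℝ} (h : aa ≤ bb) : minOnIcc (fun _ : ℝ => (0:ℝ)) aa bb = 0 := by
  rw [minOnIcc]
  rw [Set.Nonempty.image_const ⟨aa, by constructor <;> [rfl; exact h]⟩]
  exact csInf_singleton 0

lemma minOn_le {u : ℝ → ℝ} {aa bb : ℝ} (hu : ContinuousOn u (Icc aa bb)) {t : ℝ}
    (ht : t ∈ Icc aa bb) : minOnIcc u aa bb ≤ u t :=
  csInf_le (isCompact_Icc.image_of_continuousOn hu).bddBelow ⟨t, ht, rfl⟩

lemma le_minOn {u : ℝ → ℝ} {aa bb m : ℝ} (h : aa ≤ bb) (hb : ∀ t ∈ Icc aa bb, m ≤ u t) :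
    m ≤ minOnIcc u aa bb :=
  le_csInf (Set.Nonempty.image _ ⟨aa, le_refl _, h⟩) (by rintro x ⟨t, ht, rfl⟩; exact hb t ht)


section Aux
variable {A νp : Measure ℝ}

lemma lift_snd_null [SFinite A] [SFinite νp] {p : ℝ → Prop}
    (h : ∀ᵐ s ∂νp, p s) : ∀ᵐ x ∂(A.prod νp), p x.2 := by
  rw [ae_iff] at h ⊢
  obtain ⟨E, hsub, hEm, hE0⟩ := exists_measurable_superset_of_null h
  refine measure_mono_null ?_
    (show (A.prod νp) (univ ×ˢ E) = 0 by rw [Measure.prod_prod, hE0, mul_zero])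
  intro x hx; exact ⟨trivial, hsub hx⟩

lemma swap_section_null [SFinite A] [SFinite νp]
    {S : Set (ℝ × ℝ)} (hS : MeasurableSet S) (h : (A.prod νp) S = 0) :
    ∀ᵐ s ∂νp, A {t | (t, s) ∈ S} = 0 := by
  have h2 : (νp.prod A) (Prod.swap ⁻¹' S) = 0 := by
    rw [← Measure.prod_swap, Measure.map_apply measurable_swap (hS.preimage measurable_swap)]
    simpa [Set.preimage_preimage] using h
  have := MeasureTheory.Measure.measure_ae_null_of_prod_null h2
  filter_upwards [this] with s hs
  simpa [Set.preimage] using hs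

lemma prod_null_of_sections [SFinite A] [SFinite νp]
    {S : Set (ℝ × ℝ)} (hS : MeasurableSet S)
    (h : ∀ᵐ t ∂A, νp {s | (t, s) ∈ S} = 0) : (A.prod νp) S = 0 := by
  rw [Measure.measure_prod_null hS]
  filter_upwards [h] with t ht
  simpa [Set.preimage] using ht

end Aux

lemma int_nonneg_aux (A : Measure ℝ) [IsFiniteMeasure A] {aa bb cc r : ℝ}
    (haa : 0 ≤ aa) (hbb : bb ≤ 1) (hr : 0 ≤ r)
    (hsupp : A ((Icc (0:ℝ) 1)ᶜ) = 0)
    (hmass : (A (Icc (0:ℝ) 1 \ Icc aa bb)).toReal ≤ cc * (A (Icc aa bb)).toReal)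
    (w : ℝ → ℝ) (hw_meas : AEStronglyMeasurable w A)
    (hb : ∀ᵐ t ∂A, |w t| ≤ r)
    (hlow : ∀ᵐ t ∂A, t ∈ Icc aa bb → cc * r ≤ w t) :
    0 ≤ ∫ t, w t ∂A := by
  have hmem : ∀ᵐ t ∂A, t ∈ Icc (0:ℝ) 1 := by
    have h : {t : ℝ | ¬ t ∈ Icc (0:ℝ) 1} = (Icc (0:ℝ) 1)ᶜ := rfl
    rw [ae_iff, h, hsupp]
  have hint : Integrable w A := by
    refine Integrable.mono' (integrable_const r) hw_meas ?_
    filter_upwards [hb] with t ht using by rwa [Real.norm_eq_abs]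
  have hres : A.restrict (Icc (0:ℝ) 1) = A := Measure.restrict_eq_self_of_ae_mem hmem
  have hsub : Icc aa bb ⊆ Icc (0:ℝ) 1 := fun t ht => ⟨le_trans haa ht.1, le_trans ht.2 hbb⟩
  have hsplit : ∫ t, w t ∂A =
      (∫ t in Icc aa bb, w t ∂A) + ∫ t in Icc (0:ℝ) 1 \ Icc aa bb, w t ∂A := by
    calc ∫ t, w t ∂A = ∫ t in Icc (0:ℝ) 1, w t ∂A := by rw [hres]
    _ = ∫ t in Icc aa bb ∪ (Icc (0:ℝ) 1 \ Icc aa bb), w t ∂A := by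
        rw [Set.union_diff_cancel hsub]
    _ = (∫ t in Icc aa bb, w t ∂A) + ∫ t in Icc (0:ℝ) 1 \ Icc aa bb, w t ∂A :=
        setIntegral_union disjoint_sdiff_self_right
          (measurableSet_Icc.diff measurableSet_Icc) hint.integrableOn hint.integrableOn
  have hlow' : cc * r * (A (Icc aa bb)).toReal ≤ ∫ t in Icc aa bb, w t ∂A := by
    have h1 : ∀ᵐ t ∂(A.restrict (Icc aa bb)), cc * r ≤ w t := by
      filter_upwards [ae_restrict_of_ae hlow, ae_restrict_mem measurableSet_Icc]
        with t h1 h2 using h1 h2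
    have := integral_mono_ae (integrable_const (cc * r)) hint.integrableOn h1
    rwa [setIntegral_const, smul_eq_mul, mul_comm] at this
  have hup : ‖∫ t in Icc (0:ℝ) 1 \ Icc aa bb, w t ∂A‖ ≤
      r * (A (Icc (0:ℝ) 1 \ Icc aa bb)).toReal := by
    refine norm_setIntegral_le_of_norm_le_const_ae (measure_lt_top _ _) ?_
    filter_upwards [ae_restrict_of_ae hb] with t ht using by rwa [Real.norm_eq_abs]
  rw [hsplit]
  have h2 := neg_abs_le (∫ t in Icc (0:ℝ) 1 \ Icc aa bb, w t ∂A)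
  rw [Real.norm_eq_abs] at hup
  nlinarith [ENNReal.toReal_nonneg (a := A (Icc aa bb)),
    mul_le_mul_of_nonneg_left hmass hr]

lemma aux_solve {a0 b0 a1 b1 x0 x1 R0 R1 : ℝ}
    (hb0 : 0 ≤ b0) (ha1 : 0 ≤ a1)
    (ha0' : a0 < 1) (hb1' : b1 < 1)
    (hD : 0 < (1 - a0) * (1 - b1) - b0 * a1)
    (hx0 : x0 ≤ a0 * x0 + b0 * x1 + R0)
    (hx1 : x1 ≤ a1 * x0 + b1 * x1 + R1) :
    x0 ≤ ((1 - b1) * R0 + b0 * R1) / ((1 - a0) * (1 - b1) - b0 * a1) ∧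
    x1 ≤ (a1 * R0 + (1 - a0) * R1) / ((1 - a0) * (1 - b1) - b0 * a1) := by
  have h1 : (1 - a0) * x0 - b0 * x1 ≤ R0 := by linarith
  have h2 : -(a1 * x0) + (1 - b1) * x1 ≤ R1 := by linarith
  constructor
  · rw [le_div_iff₀ hD]
    nlinarith [mul_le_mul_of_nonneg_left h1 (by linarith : (0:ℝ) ≤ 1 - b1),
      mul_le_mul_of_nonneg_left h2 hb0]
  · rw [le_div_iff₀ hD]
    nlinarith [mul_le_mul_of_nonneg_left h1 ha1,
      mul_le_mul_of_nonneg_left h2 (by linarith : (0:ℝ) ≤ 1 - a0)]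

set_option maxHeartbeats 2000000 in
lemma aux_main
    (kk : ℝ → ℝ → ℝ) (gg Φ q u v g0 g1 : ℝ → ℝ)
    (h0 h1 fb ρi ρl μc aa bb cc N0 N1 : ℝ)
    (A0 A1 B0 B1 : Measure ℝ)
    [IsFiniteMeasure A0] [IsFiniteMeasure A1] [IsFiniteMeasure B0] [IsFiniteMeasure B1]
    (hA0s : A0 ((Icc (0:ℝ) 1)ᶜ) = 0) (hA1s : A1 ((Icc (0:ℝ) 1)ᶜ) = 0)
    (hB0s : B0 ((Icc (0:ℝ) 1)ᶜ) = 0) (hB1s : B1 ((Icc (0:ℝ) 1)ᶜ) = 0)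
    (hμc : 1 ≤ μc) (hρi : 0 < ρi) (hρl : 0 ≤ ρl)
    (haa : 0 ≤ aa) (habb : aa ≤ bb) (hbb : bb ≤ 1) (hcc : 0 < cc)
    (hmass0 : (A0 (Icc (0:ℝ) 1 \ Icc aa bb)).toReal ≤ cc * (A0 (Icc aa bb)).toReal)
    (hmass1 : (A1 (Icc (0:ℝ) 1 \ Icc aa bb)).toReal ≤ cc * (A1 (Icc aa bb)).toReal)
    (hk_meas : Measurable (Function.uncurry kk))
    (hΦ_meas : Measurable Φ) (hg_meas : Measurable gg)
    (hg_nonneg : ∀ᵐ s ∂(volume.restrict (Icc (0:ℝ) 1)), 0 ≤ gg s)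
    (hΦg_int : IntegrableOn (fun s => gg s * Φ s) (Icc (0:ℝ) 1))
    (hkb : ∀ t ∈ Icc (0:ℝ) 1, ∀ᵐ s ∂(volume.restrict (Icc (0:ℝ) 1)), |kk t s| ≤ Φ s)
    (hkl : ∀ t ∈ Icc aa bb, ∀ᵐ s ∂(volume.restrict (Icc (0:ℝ) 1)), cc * Φ s ≤ kk t s)
    (hq_meas : StronglyMeasurable q)
    (hq_nonneg : ∀ᵐ s ∂(volume.restrict (Icc (0:ℝ) 1)), 0 ≤ q s)
    (hq_bd : ∀ᵐ s ∂(volume.restrict (Icc (0:ℝ) 1)), q s ≤ fb * ρi)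
    (hu_cont : Continuous u)
    (hu_bd : ∀ t ∈ Icc (0:ℝ) 1, |u t| ≤ ρi)
    (hu_low : ∀ t ∈ Icc aa bb, cc * ρi ≤ u t)
    (ht0 : ∃ t0 ∈ Icc (0:ℝ) 1, |u t0| = ρi)
    (hv_cont : Continuous v)
    (hv_bd : ∀ t ∈ Icc (0:ℝ) 1, |v t| ≤ ρl)
    (hg0_cont : Continuous g0) (hg1_cont : Continuous g1)
    (hN0 : 0 ≤ N0) (hN1 : 0 ≤ N1)
    (hg0_bd : ∀ t ∈ Icc (0:ℝ) 1, |g0 t| ≤ N0) (hg1_bd : ∀ t ∈ Icc (0:ℝ) 1, |g1 t| ≤ N1)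
    (hg0_low : ∀ t ∈ Icc aa bb, cc * N0 ≤ g0 t) (hg1_low : ∀ t ∈ Icc aa bb, cc * N1 ≤ g1 t)
    (hh0 : 0 ≤ h0) (hh1 : 0 ≤ h1)
    (hHb0 : h0 ≤ (∫ t, u t ∂A0) + ∫ t, v t ∂B0)
    (hHb1 : h1 ≤ (∫ t, u t ∂A1) + ∫ t, v t ∂B1)
    (heq : ∀ t ∈ Icc (0:ℝ) 1,
      μc * u t = g0 t * h0 + g1 t * h1 + ∫ s in (0:ℝ)..1, kk t s * gg s * q s)
    {a0 b0 a1 b1 κ0 κ1 Bt0 Bt1 M D : ℝ}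
    (ha0 : a0 = ∫ t, g0 t ∂A0) (hb0 : b0 = ∫ t, g1 t ∂A0)
    (ha1 : a1 = ∫ t, g0 t ∂A1) (hb1 : b1 = ∫ t, g1 t ∂A1)
    (hκ0 : κ0 = ∫ s in (0:ℝ)..1, (∫ t, kk t s ∂A0) * gg s)
    (hκ1 : κ1 = ∫ s in (0:ℝ)..1, (∫ t, kk t s ∂A1) * gg s)
    (hBt0 : Bt0 = (B0 univ).toReal) (hBt1 : Bt1 = (B1 univ).toReal)
    (hM : M = sSup ((fun t => ∫ s in (0:ℝ)..1, |kk t s| * gg s) '' Icc (0:ℝ) 1))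
    (hD : D = (1 - a0) * (1 - b1) - b0 * a1)
    (ha0' : a0 < 1) (hb1' : b1 < 1) (hDpos : 0 < D)
    (hcond : fb * ((N0 * ((1 - b1)/D) + N1 * (a1/D)) * κ0 +
        (N0 * (b0/D) + N1 * ((1 - a0)/D)) * κ1 + M) +
        N0 * ((1 - b1)/D * (ρl/ρi*(a0*Bt0 + b0*Bt1)) + (b0/D) * (ρl/ρi*(a1*Bt0 + b1*Bt1))) +
        N1 * ((a1/D) * (ρl/ρi*(a0*Bt0 + b0*Bt1)) + ((1 - a0)/D) * (ρl/ρi*(a1*Bt0 + b1*Bt1))) +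
        ρl / ρi * (N0 * Bt0 + N1 * Bt1) < 1) : False := by
  classical
  set ν : Measure ℝ := volume.restrict (Icc (0:ℝ) 1) with hνdef
  set ν' : Measure ℝ := volume.restrict (Ioc (0:ℝ) 1) with hν'def
  have hν'le : ∀ p : ℝ → Prop, (∀ᵐ s ∂ν, p s) → (∀ᵐ s ∂ν', p s) := fun p h =>
    ae_restrict_of_ae_restrict_of_subset Ioc_subset_Icc_self h
  have h0mem : (0:ℝ) ∈ Icc (0:ℝ) 1 := by norm_num
  have hΦnn : ∀ᵐ s ∂ν, 0 ≤ Φ s := by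
    filter_upwards [hkb 0 h0mem] with s hs using le_trans (abs_nonneg _) hs
  have hνne : ν ≠ 0 := by
    intro hc
    have h1 : ν univ = 0 := by rw [hc]; rfl
    rw [hνdef, Measure.restrict_apply_univ, Real.volume_Icc] at h1
    norm_num at h1
  have hfbρ : 0 ≤ fb * ρi := by
    have hne : (ae ν).NeBot := ae_neBot.mpr hνne
    obtain ⟨s, hs1, hs2⟩ := (hq_nonneg.and hq_bd).exists
    linarith
  -- key facts for each of the measures A0, A1
  have keyA : ∀ (A : Measure ℝ) (_ : IsFiniteMeasure A) (_ : A ((Icc (0:ℝ) 1)ᶜ) = 0)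
      (_ : (A (Icc (0:ℝ) 1 \ Icc aa bb)).toReal ≤ cc * (A (Icc aa bb)).toReal),
      0 ≤ (∫ t, u t ∂A) ∧ 0 ≤ (∫ t, g0 t ∂A) ∧ 0 ≤ (∫ t, g1 t ∂A) ∧
      μc * (∫ t, u t ∂A) = (∫ t, g0 t ∂A) * h0 + (∫ t, g1 t ∂A) * h1 +
        (∫ s, (∫ t, kk t s ∂A) * (gg s * q s) ∂ν') ∧
      (∫ s, (∫ t, kk t s ∂A) * (gg s * q s) ∂ν') ≤
        fb * ρi * (∫ s in (0:ℝ)..1, (∫ t, kk t s ∂A) * gg s) := by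
    intro A hfin hsupp hmass
    haveI := hfin
    have hmem : ∀ᵐ t ∂A, t ∈ Icc (0:ℝ) 1 := by
      have h : {t : ℝ | ¬ t ∈ Icc (0:ℝ) 1} = (Icc (0:ℝ) 1)ᶜ := rfl
      rw [ae_iff, h, hsupp]
    have hxu : 0 ≤ ∫ t, u t ∂A :=
      int_nonneg_aux A haa hbb hρi.le hsupp hmass u hu_cont.aestronglyMeasurable
        (hmem.mono fun t ht => hu_bd t ht) (Filter.Eventually.of_forall hu_low)
    have hxg0 : 0 ≤ ∫ t, g0 t ∂A :=
      int_nonneg_aux A haa hbb hN0 hsupp hmass g0 hg0_cont.aestronglyMeasurable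
        (hmem.mono fun t ht => hg0_bd t ht) (Filter.Eventually.of_forall hg0_low)
    have hxg1 : 0 ≤ ∫ t, g1 t ∂A :=
      int_nonneg_aux A haa hbb hN1 hsupp hmass g1 hg1_cont.aestronglyMeasurable
        (hmem.mono fun t ht => hg1_bd t ht) (Filter.Eventually.of_forall hg1_low)
    -- joint integrability
    have hGm : Measurable (fun x : ℝ × ℝ => kk x.1 x.2 * gg x.2 * q x.2) :=
      (hk_meas.mul (hg_meas.comp measurable_snd)).mul
        (hq_meas.measurable.comp measurable_snd)
    have hSb : MeasurableSet {x : ℝ × ℝ | ¬ |kk x.1 x.2| ≤ Φ x.2} := by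
      have h : {x : ℝ × ℝ | ¬ |kk x.1 x.2| ≤ Φ x.2} =
          {x : ℝ × ℝ | Φ x.2 < |kk x.1 x.2|} := by ext x; simp [not_le]
      rw [h]
      exact measurableSet_lt (hΦ_meas.comp measurable_snd) hk_meas.abs
    have hPb : (A.prod ν') {x : ℝ × ℝ | ¬ |kk x.1 x.2| ≤ Φ x.2} = 0 := by
      refine prod_null_of_sections hSb ?_
      filter_upwards [hmem] with t ht
      have h2 := hν'le _ (hkb t ht)
      rw [ae_iff] at h2
      exact h2
    have haeprod : ∀ᵐ x ∂(A.prod ν'), |kk x.1 x.2| ≤ Φ x.2 := by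
      rw [ae_iff]; exact hPb
    have hsae : ∀ᵐ s ∂ν', 0 ≤ gg s ∧ 0 ≤ q s ∧ q s ≤ fb * ρi ∧ 0 ≤ Φ s := by
      refine hν'le _ ?_
      filter_upwards [hg_nonneg, hq_nonneg, hq_bd, hΦnn] with s h1 h2 h3 h4
      exact ⟨h1, h2, h3, h4⟩
    have hsfacts : ∀ᵐ x ∂(A.prod ν'),
        0 ≤ gg x.2 ∧ 0 ≤ q x.2 ∧ q x.2 ≤ fb * ρi ∧ 0 ≤ Φ x.2 :=
      lift_snd_null (A := A) hsae
    have hWint : Integrable (fun x : ℝ × ℝ => Φ x.2 * gg x.2 * (fb * ρi)) (A.prod ν') := by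
      have hWm : AEStronglyMeasurable (fun x : ℝ × ℝ => Φ x.2 * gg x.2 * (fb * ρi))
          (A.prod ν') :=
        (((hΦ_meas.comp measurable_snd).mul (hg_meas.comp measurable_snd)).mul_const
          _).aestronglyMeasurable
      rw [integrable_prod_iff hWm]
      constructor
      · refine Filter.Eventually.of_forall fun t => ?_
        have h3 : IntegrableOn (fun s => Φ s * gg s) (Ioc (0:ℝ) 1) :=
          ((hΦg_int.mono_set Ioc_subset_Icc_self).congr_fun
            (fun s _ => mul_comm (gg s) (Φ s)) measurableSet_Ioc)
        exact h3.mul_const _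
      · exact (integrable_const (∫ s, ‖Φ s * gg s * (fb * ρi)‖ ∂ν')).congr
          (Filter.Eventually.of_forall fun t => rfl)
    have hGint : Integrable (fun x : ℝ × ℝ => kk x.1 x.2 * gg x.2 * q x.2) (A.prod ν') := by
      refine hWint.mono' hGm.aestronglyMeasurable ?_
      filter_upwards [haeprod, hsfacts] with x h1 h2
      rw [Real.norm_eq_abs, abs_mul, abs_mul, abs_of_nonneg h2.1, abs_of_nonneg h2.2.1]
      calc |kk x.1 x.2| * gg x.2 * q x.2 ≤ Φ x.2 * gg x.2 * q x.2 :=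
            mul_le_mul_of_nonneg_right (mul_le_mul_of_nonneg_right h1 h2.1) h2.2.1
      _ ≤ Φ x.2 * gg x.2 * (fb * ρi) :=
            mul_le_mul_of_nonneg_left h2.2.2.1 (mul_nonneg h2.2.2.2 h2.1)
    -- Fubini
    have hswap : (∫ t, (∫ s, kk t s * gg s * q s ∂ν') ∂A) =
        ∫ s, (∫ t, kk t s * gg s * q s ∂A) ∂ν' :=
      integral_integral_swap (f := fun t s => kk t s * gg s * q s) hGint
    have hinner : ∀ s : ℝ, (∫ t, kk t s * gg s * q s ∂A) =
        (∫ t, kk t s ∂A) * (gg s * q s) := by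
      intro s
      simp_rw [mul_assoc]
      exact integral_mul_const _ _
    have hswap' : (∫ t, (∫ s, kk t s * gg s * q s ∂ν') ∂A) =
        ∫ s, (∫ t, kk t s ∂A) * (gg s * q s) ∂ν' := by
      rw [hswap]; exact integral_congr_ae (Filter.Eventually.of_forall hinner)
    -- integrate the equation
    have hg0A : Integrable g0 A := by
      refine Integrable.mono' (integrable_const N0) hg0_cont.aestronglyMeasurable ?_
      filter_upwards [hmem] with t ht using by rw [Real.norm_eq_abs]; exact hg0_bd t ht
    have hg1A : Integrable g1 A := by
      refine Integrable.mono' (integrable_const N1) hg1_cont.aestronglyMeasurable ?_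
      filter_upwards [hmem] with t ht using by rw [Real.norm_eq_abs]; exact hg1_bd t ht
    have hFint : Integrable (fun t => ∫ s, kk t s * gg s * q s ∂ν') A :=
      Integrable.integral_prod_left
        (f := fun x : ℝ × ℝ => kk x.1 x.2 * gg x.2 * q x.2) hGint
    have hieq : μc * (∫ t, u t ∂A) = (∫ t, g0 t ∂A) * h0 + (∫ t, g1 t ∂A) * h1 +
        ∫ s, (∫ t, kk t s ∂A) * (gg s * q s) ∂ν' := by
      have e1 : ∫ t, μc * u t ∂A =
          ∫ t, (g0 t * h0 + g1 t * h1 + ∫ s, kk t s * gg s * q s ∂ν') ∂A := by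
        refine integral_congr_ae (hmem.mono fun t ht => ?_)
        show μc * u t = g0 t * h0 + g1 t * h1 + ∫ s, kk t s * gg s * q s ∂ν'
        rw [heq t ht, intervalIntegral.integral_of_le zero_le_one]
      rw [integral_const_mul] at e1
      rw [integral_add (f := fun t => g0 t * h0 + g1 t * h1)
          (g := fun t => ∫ s, kk t s * gg s * q s ∂ν')
          ((hg0A.mul_const _).add (hg1A.mul_const _)) hFint,
        integral_add (f := fun t => g0 t * h0) (g := fun t => g1 t * h1)
          (hg0A.mul_const _) (hg1A.mul_const _),
        integral_mul_const, integral_mul_const] at e1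
      rw [e1, hswap']
    -- the kernel transform is a.e. nonnegative
    have hS2m : MeasurableSet {x : ℝ × ℝ | x.1 ∈ Icc aa bb ∧ kk x.1 x.2 < cc * Φ x.2} := by
      refine MeasurableSet.inter (measurable_fst measurableSet_Icc) ?_
      exact measurableSet_lt hk_meas (measurable_const.mul (hΦ_meas.comp measurable_snd))
    have hP2 : (A.prod ν') {x : ℝ × ℝ | x.1 ∈ Icc aa bb ∧ kk x.1 x.2 < cc * Φ x.2} = 0 := by
      refine prod_null_of_sections hS2m ?_
      refine Filter.Eventually.of_forall fun t => ?_
      by_cases ht : t ∈ Icc aa bb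
      · have h2 := hν'le _ (hkl t ht)
        rw [ae_iff] at h2
        refine measure_mono_null (fun s hs => ?_) h2
        simp only [mem_setOf_eq] at hs ⊢
        exact not_le.mpr hs.2
      · have h3 : {s : ℝ | (t, s) ∈ {x : ℝ × ℝ | x.1 ∈ Icc aa bb ∧
            kk x.1 x.2 < cc * Φ x.2}} = ∅ := by
          ext s; simp only [mem_setOf_eq, mem_empty_iff_false, iff_false, not_and]
          exact fun h => absurd h ht
        rw [h3]; simp
    have hkAb : ∀ᵐ s ∂ν', (∀ᵐ t ∂A, |kk t s| ≤ Φ s) ∧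
        (∀ᵐ t ∂A, t ∈ Icc aa bb → cc * Φ s ≤ kk t s) := by
      filter_upwards [swap_section_null hSb hPb, swap_section_null hS2m hP2] with s e1 e2
      constructor
      · rw [ae_iff]; exact e1
      · rw [ae_iff]
        refine measure_mono_null (fun t ht => ?_) e2
        simp only [mem_setOf_eq, not_forall] at ht ⊢
        obtain ⟨ht1, ht2⟩ := ht
        exact ⟨ht1, not_le.mp ht2⟩
    have hKnn : ∀ᵐ s ∂ν', 0 ≤ ∫ t, kk t s ∂A := by
      filter_upwards [hkAb, hν'le _ hΦnn] with s hs hΦs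
      exact int_nonneg_aux A haa hbb hΦs hsupp hmass (fun t => kk t s)
        ((hk_meas.comp (measurable_id.prodMk measurable_const)).aestronglyMeasurable)
        hs.1 hs.2
    have hKbd : ∀ᵐ s ∂ν', |∫ t, kk t s ∂A| ≤ Φ s * (A univ).toReal := by
      filter_upwards [hkAb] with s hs
      have h5 : ‖∫ t, kk t s ∂A‖ ≤ Φ s * (A univ).toReal := by
        refine norm_integral_le_of_norm_le_const ?_
        filter_upwards [hs.1] with t ht using by rwa [Real.norm_eq_abs]
      rwa [Real.norm_eq_abs] at h5
    have hKA_sm : StronglyMeasurable (fun s => ∫ t, kk t s ∂A) :=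
      hk_meas.stronglyMeasurable.integral_prod_left'
    have hf1int : Integrable (fun s => (∫ t, kk t s ∂A) * (gg s * q s)) ν' := by
      have h8 : Integrable (fun s => ∫ t, kk t s * gg s * q s ∂A) ν' :=
        Integrable.integral_prod_right
          (f := fun x : ℝ × ℝ => kk x.1 x.2 * gg x.2 * q x.2) hGint
      exact h8.congr (Filter.Eventually.of_forall hinner)
    have hf2int : Integrable (fun s => (∫ t, kk t s ∂A) * gg s * (fb * ρi)) ν' := by
      refine Integrable.mono'
        (g := fun s => Φ s * gg s * ((A univ).toReal * (fb * ρi))) ?_ ?_ ?_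
      · have h3 : IntegrableOn (fun s => Φ s * gg s) (Ioc (0:ℝ) 1) :=
          ((hΦg_int.mono_set Ioc_subset_Icc_self).congr_fun
            (fun s _ => mul_comm (gg s) (Φ s)) measurableSet_Ioc)
        exact h3.mul_const _
      · exact ((hKA_sm.mul hg_meas.stronglyMeasurable).mul_const _).aestronglyMeasurable
      · filter_upwards [hKbd, hν'le _ hg_nonneg, hν'le _ hΦnn] with s h1 h2 h3
        rw [Real.norm_eq_abs, abs_mul, abs_mul, abs_of_nonneg h2,
          abs_of_nonneg hfbρ]
        calc |∫ t, kk t s ∂A| * gg s * (fb * ρi) ≤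
            Φ s * (A univ).toReal * gg s * (fb * ρi) :=
              mul_le_mul_of_nonneg_right (mul_le_mul_of_nonneg_right h1 h2) hfbρ
        _ = Φ s * gg s * ((A univ).toReal * (fb * ρi)) := by ring
    have hPle : (∫ s, (∫ t, kk t s ∂A) * (gg s * q s) ∂ν') ≤
        fb * ρi * (∫ s in (0:ℝ)..1, (∫ t, kk t s ∂A) * gg s) := by
      have hm : (∫ s, (∫ t, kk t s ∂A) * (gg s * q s) ∂ν') ≤
          ∫ s, (∫ t, kk t s ∂A) * gg s * (fb * ρi) ∂ν' := by
        refine integral_mono_ae hf1int hf2int ?_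
        filter_upwards [hKnn, hν'le _ hg_nonneg, hν'le _ hq_nonneg, hν'le _ hq_bd]
          with s h1 h2 h3 h4
        calc (∫ t, kk t s ∂A) * (gg s * q s) ≤ (∫ t, kk t s ∂A) * (gg s * (fb * ρi)) :=
              mul_le_mul_of_nonneg_left (mul_le_mul_of_nonneg_left h4 h2) h1
        _ = (∫ t, kk t s ∂A) * gg s * (fb * ρi) := (mul_assoc _ _ _).symm
      have he : (∫ s, (∫ t, kk t s ∂A) * gg s * (fb * ρi) ∂ν') =
          (∫ s, (∫ t, kk t s ∂A) * gg s ∂ν') * (fb * ρi) := integral_mul_const _ _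
      rw [he] at hm
      rw [intervalIntegral.integral_of_le zero_le_one]
      calc (∫ s, (∫ t, kk t s ∂A) * (gg s * q s) ∂ν') ≤
          (∫ s, (∫ t, kk t s ∂A) * gg s ∂ν') * (fb * ρi) := hm
      _ = fb * ρi * ∫ s in Ioc (0:ℝ) 1, (∫ t, kk t s ∂A) * gg s := by
          rw [mul_comm]
    exact ⟨hxu, hxg0, hxg1, hieq, hPle⟩
  have keyB : ∀ (B : Measure ℝ) (_ : IsFiniteMeasure B) (_ : B ((Icc (0:ℝ) 1)ᶜ) = 0),
      (∫ t, v t ∂B) ≤ ρl * (B univ).toReal := by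
    intro B hfin hsupp
    haveI := hfin
    have hmem : ∀ᵐ t ∂B, t ∈ Icc (0:ℝ) 1 := by
      have h : {t : ℝ | ¬ t ∈ Icc (0:ℝ) 1} = (Icc (0:ℝ) 1)ᶜ := rfl
      rw [ae_iff, h, hsupp]
    have hv_int : Integrable v B := by
      refine Integrable.mono' (integrable_const ρl) hv_cont.aestronglyMeasurable ?_
      filter_upwards [hmem] with t ht using by rw [Real.norm_eq_abs]; exact hv_bd t ht
    have h2 := integral_mono_ae hv_int (integrable_const ρl)
      (hmem.mono fun t ht => le_trans (le_abs_self _) (hv_bd t ht))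
    rwa [integral_const, smul_eq_mul, mul_comm] at h2
  obtain ⟨hx0nn, ha0nn, hb0nn, hieq0, hP0le⟩ := keyA A0 ‹_› hA0s hmass0
  obtain ⟨hx1nn, ha1nn, hb1nn, hieq1, hP1le⟩ := keyA A1 ‹_› hA1s hmass1
  rw [← ha0, ← hb0] at hieq0
  rw [← ha1, ← hb1] at hieq1
  rw [← hκ0] at hP0le
  rw [← hκ1] at hP1le
  rw [← ha0] at ha0nn
  rw [← hb0] at hb0nn
  rw [← ha1] at ha1nn
  rw [← hb1] at hb1nn
  have hy0 : (∫ t, v t ∂B0) ≤ ρl * Bt0 := by rw [hBt0]; exact keyB B0 ‹_› hB0s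
  have hy1 : (∫ t, v t ∂B1) ≤ ρl * Bt1 := by rw [hBt1]; exact keyB B1 ‹_› hB1s
  have hh0le : h0 ≤ (∫ t, u t ∂A0) + ρl * Bt0 := le_trans hHb0 (by linarith)
  have hh1le : h1 ≤ (∫ t, u t ∂A1) + ρl * Bt1 := le_trans hHb1 (by linarith)
  -- the solved system
  have hineq0 : (∫ t, u t ∂A0) ≤ a0 * (∫ t, u t ∂A0) + b0 * (∫ t, u t ∂A1) +
      (fb * ρi * κ0 + ρl * (a0 * Bt0 + b0 * Bt1)) := by
    have s1 : (∫ t, u t ∂A0) ≤ μc * (∫ t, u t ∂A0) := le_mul_of_one_le_left hx0nn hμc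
    have s4 : a0 * h0 ≤ a0 * ((∫ t, u t ∂A0) + ρl * Bt0) :=
      mul_le_mul_of_nonneg_left hh0le ha0nn
    have s5 : b0 * h1 ≤ b0 * ((∫ t, u t ∂A1) + ρl * Bt1) :=
      mul_le_mul_of_nonneg_left hh1le hb0nn
    have s4' : a0 * ((∫ t, u t ∂A0) + ρl * Bt0) =
        a0 * (∫ t, u t ∂A0) + ρl * (a0 * Bt0) := by ring
    have s5' : b0 * ((∫ t, u t ∂A1) + ρl * Bt1) =
        b0 * (∫ t, u t ∂A1) + ρl * (b0 * Bt1) := by ring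
    have s6 : ρl * (a0 * Bt0) + ρl * (b0 * Bt1) = ρl * (a0 * Bt0 + b0 * Bt1) := by ring
    linarith [hP0le, hieq0]
  have hineq1 : (∫ t, u t ∂A1) ≤ a1 * (∫ t, u t ∂A0) + b1 * (∫ t, u t ∂A1) +
      (fb * ρi * κ1 + ρl * (a1 * Bt0 + b1 * Bt1)) := by
    have s1 : (∫ t, u t ∂A1) ≤ μc * (∫ t, u t ∂A1) := le_mul_of_one_le_left hx1nn hμc
    have s4 : a1 * h0 ≤ a1 * ((∫ t, u t ∂A0) + ρl * Bt0) :=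
      mul_le_mul_of_nonneg_left hh0le ha1nn
    have s5 : b1 * h1 ≤ b1 * ((∫ t, u t ∂A1) + ρl * Bt1) :=
      mul_le_mul_of_nonneg_left hh1le hb1nn
    have s4' : a1 * ((∫ t, u t ∂A0) + ρl * Bt0) =
        a1 * (∫ t, u t ∂A0) + ρl * (a1 * Bt0) := by ring
    have s5' : b1 * ((∫ t, u t ∂A1) + ρl * Bt1) =
        b1 * (∫ t, u t ∂A1) + ρl * (b1 * Bt1) := by ring
    have s6 : ρl * (a1 * Bt0) + ρl * (b1 * Bt1) = ρl * (a1 * Bt0 + b1 * Bt1) := by ring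
    linarith [hP1le, hieq1]
  have hsol := aux_solve hb0nn ha1nn ha0' hb1' (by rw [← hD]; exact hDpos) hineq0 hineq1
  rw [← hD] at hsol
  obtain ⟨hx0le, hx1le⟩ := hsol
  -- evaluation at the maximum point
  obtain ⟨t0, ht0m, ht0e⟩ := ht0
  have hΦgInt : Integrable (fun s => Φ s * gg s) ν' :=
    (hΦg_int.mono_set Ioc_subset_Icc_self).congr_fun
      (fun s _ => mul_comm (gg s) (Φ s)) measurableSet_Ioc
  have habs_int : ∀ t ∈ Icc (0:ℝ) 1, Integrable (fun s => |kk t s| * gg s) ν' := by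
    intro t ht
    refine Integrable.mono' hΦgInt
      (((hk_meas.comp (measurable_const.prodMk measurable_id)).abs.mul
        hg_meas).aestronglyMeasurable) ?_
    filter_upwards [hν'le _ (hkb t ht), hν'le _ hg_nonneg] with s h1 h2
    rw [Real.norm_eq_abs, abs_mul, abs_abs, abs_of_nonneg h2]
    exact mul_le_mul_of_nonneg_right h1 h2
  have hbddM : ∀ t ∈ Icc (0:ℝ) 1, (∫ s in (0:ℝ)..1, |kk t s| * gg s) ≤
      ∫ s, Φ s * gg s ∂ν' := by
    intro t ht
    rw [intervalIntegral.integral_of_le zero_le_one]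
    refine integral_mono_ae (habs_int t ht) hΦgInt ?_
    filter_upwards [hν'le _ (hkb t ht), hν'le _ hg_nonneg] with s h1 h2
    exact mul_le_mul_of_nonneg_right h1 h2
  have hMge : (∫ s in (0:ℝ)..1, |kk t0 s| * gg s) ≤ M := by
    rw [hM]
    refine le_csSup ⟨∫ s, Φ s * gg s ∂ν', ?_⟩ ⟨t0, ht0m, rfl⟩
    rintro x ⟨t, ht, rfl⟩
    exact hbddM t ht
  have hFt0 : |∫ s in (0:ℝ)..1, kk t0 s * gg s * q s| ≤ fb * ρi * M := by
    rw [intervalIntegral.integral_of_le zero_le_one]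
    have hi1 : Integrable (fun s => kk t0 s * gg s * q s) ν' := by
      refine Integrable.mono' ((habs_int t0 ht0m).mul_const (fb * ρi))
        ((((hk_meas.comp (measurable_const.prodMk measurable_id)).mul hg_meas).mul
          hq_meas.measurable).aestronglyMeasurable) ?_
      filter_upwards [hν'le _ hg_nonneg, hν'le _ hq_nonneg, hν'le _ hq_bd]
        with s h2 h3 h4
      rw [Real.norm_eq_abs, abs_mul, abs_mul, abs_of_nonneg h2, abs_of_nonneg h3]
      exact mul_le_mul_of_nonneg_left h4 (mul_nonneg (abs_nonneg _) h2)
    have h5 : |∫ s, kk t0 s * gg s * q s ∂ν'| ≤ ∫ s, |kk t0 s * gg s * q s| ∂ν' := by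
      have h5' := norm_integral_le_integral_norm (μ := ν') (fun s => kk t0 s * gg s * q s)
      simp only [Real.norm_eq_abs] at h5'
      exact h5'
    have h6 : (∫ s, |kk t0 s * gg s * q s| ∂ν') ≤
        ∫ s, |kk t0 s| * gg s * (fb * ρi) ∂ν' := by
      refine integral_mono_ae hi1.abs ((habs_int t0 ht0m).mul_const _) ?_
      filter_upwards [hν'le _ hg_nonneg, hν'le _ hq_nonneg, hν'le _ hq_bd]
        with s h2 h3 h4
      rw [abs_mul, abs_mul, abs_of_nonneg h2, abs_of_nonneg h3]
      exact mul_le_mul_of_nonneg_left h4 (mul_nonneg (abs_nonneg _) h2)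
    have h7 : (∫ s, |kk t0 s| * gg s * (fb * ρi) ∂ν') =
        (∫ s, |kk t0 s| * gg s ∂ν') * (fb * ρi) := integral_mul_const _ _
    have h8 : (∫ s, |kk t0 s| * gg s ∂ν') * (fb * ρi) ≤ M * (fb * ρi) := by
      refine mul_le_mul_of_nonneg_right ?_ hfbρ
      have h9 := hMge
      rwa [intervalIntegral.integral_of_le zero_le_one] at h9
    have h10 : M * (fb * ρi) = fb * ρi * M := by ring
    linarith
  have hμpos : (0:ℝ) < μc := lt_of_lt_of_le one_pos hμc
  have hmain : μc * ρi ≤ N0 * h0 + N1 * h1 + fb * ρi * M := by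
    have e := heq t0 ht0m
    have e2 : μc * ρi = |μc * u t0| := by rw [abs_mul, abs_of_pos hμpos, ht0e]
    rw [e2, e]
    calc |g0 t0 * h0 + g1 t0 * h1 + ∫ s in (0:ℝ)..1, kk t0 s * gg s * q s| ≤
        |g0 t0 * h0 + g1 t0 * h1| + |∫ s in (0:ℝ)..1, kk t0 s * gg s * q s| := abs_add_le _ _
    _ ≤ |g0 t0| * h0 + |g1 t0| * h1 + |∫ s in (0:ℝ)..1, kk t0 s * gg s * q s| := by
        have h11 := abs_add_le (g0 t0 * h0) (g1 t0 * h1)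
        rw [abs_mul, abs_mul, abs_of_nonneg hh0, abs_of_nonneg hh1] at h11
        linarith
    _ ≤ N0 * h0 + N1 * h1 + fb * ρi * M := by
        have b1' := mul_le_mul_of_nonneg_right (hg0_bd t0 ht0m) hh0
        have b2' := mul_le_mul_of_nonneg_right (hg1_bd t0 ht0m) hh1
        linarith [hFt0]
  -- final contradiction
  have hDne : D ≠ 0 := ne_of_gt hDpos
  have hρine : ρi ≠ 0 := ne_of_gt hρi
  have hs0 : N0 * h0 ≤ N0 * (((1 - b1) * (fb * ρi * κ0 + ρl * (a0 * Bt0 + b0 * Bt1)) +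
      b0 * (fb * ρi * κ1 + ρl * (a1 * Bt0 + b1 * Bt1))) / D + ρl * Bt0) :=
    mul_le_mul_of_nonneg_left (by linarith) hN0
  have hs1 : N1 * h1 ≤ N1 * ((a1 * (fb * ρi * κ0 + ρl * (a0 * Bt0 + b0 * Bt1)) +
      (1 - a0) * (fb * ρi * κ1 + ρl * (a1 * Bt0 + b1 * Bt1))) / D + ρl * Bt1) :=
    mul_le_mul_of_nonneg_left (by linarith) hN1
  have hE : N0 * (((1 - b1) * (fb * ρi * κ0 + ρl * (a0 * Bt0 + b0 * Bt1)) +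
      b0 * (fb * ρi * κ1 + ρl * (a1 * Bt0 + b1 * Bt1))) / D + ρl * Bt0) +
      N1 * ((a1 * (fb * ρi * κ0 + ρl * (a0 * Bt0 + b0 * Bt1)) +
      (1 - a0) * (fb * ρi * κ1 + ρl * (a1 * Bt0 + b1 * Bt1))) / D + ρl * Bt1) +
      fb * ρi * M =
      ρi * (fb * ((N0 * ((1 - b1)/D) + N1 * (a1/D)) * κ0 +
        (N0 * (b0/D) + N1 * ((1 - a0)/D)) * κ1 + M) +
        N0 * ((1 - b1)/D * (ρl/ρi*(a0*Bt0 + b0*Bt1)) + (b0/D) * (ρl/ρi*(a1*Bt0 + b1*Bt1))) +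
        N1 * ((a1/D) * (ρl/ρi*(a0*Bt0 + b0*Bt1)) + ((1 - a0)/D) * (ρl/ρi*(a1*Bt0 + b1*Bt1))) +
        ρl / ρi * (N0 * Bt0 + N1 * Bt1)) := by
    field_simp
    ring
  have hlt : ρi * (fb * ((N0 * ((1 - b1)/D) + N1 * (a1/D)) * κ0 +
        (N0 * (b0/D) + N1 * ((1 - a0)/D)) * κ1 + M) +
        N0 * ((1 - b1)/D * (ρl/ρi*(a0*Bt0 + b0*Bt1)) + (b0/D) * (ρl/ρi*(a1*Bt0 + b1*Bt1))) +
        N1 * ((a1/D) * (ρl/ρi*(a0*Bt0 + b0*Bt1)) + ((1 - a0)/D) * (ρl/ρi*(a1*Bt0 + b1*Bt1))) +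
        ρl / ρi * (N0 * Bt0 + N1 * Bt1)) < ρi * 1 :=
    mul_lt_mul_of_pos_left hcond hρi
  have hge : ρi * 1 ≤ μc * ρi := by rw [mul_one]; exact le_mul_of_one_le_left hρi.le hμc
  linarith



lemma mass_aux (A : Measure ℝ) [IsFiniteMeasure A] {aa bb cc ρa : ℝ}
    (haa : 0 ≤ aa) (habb : aa ≤ bb) (hbb : bb ≤ 1) (hcc : 0 < cc) (hcc1 : cc ≤ 1)
    (hρa : 0 < ρa)
    (hsupp : A ((Icc (0:ℝ) 1)ᶜ) = 0)
    (htest : ∀ uT : ℝ → ℝ, Continuous uT → nrm uT = ρa →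
      cc * ρa ≤ minOnIcc uT aa bb → (∀ t ∈ Icc (0:ℝ) 1, |uT t| ≤ ρa) →
      0 ≤ ∫ t, uT t ∂A) :
    (A (Icc (0:ℝ) 1 \ Icc aa bb)).toReal ≤ cc * (A (Icc aa bb)).toReal := by
  by_cases hfull : Icc (0:ℝ) 1 ⊆ Icc aa bb
  · have he : Icc (0:ℝ) 1 \ Icc aa bb = ∅ := diff_eq_empty.mpr hfull
    rw [he]
    simp only [measure_empty, ENNReal.toReal_zero]
    positivity
  · obtain ⟨t₁, ht₁, ht₁n⟩ := not_subset.mp hfull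
    set dfun : ℝ → ℝ := fun t => max (aa - t) (max (t - bb) 0) with hdfun
    have hdcont : Continuous dfun :=
      (continuous_const.sub continuous_id).max
        ((continuous_id.sub continuous_const).max continuous_const)
    have hdnn : ∀ t, 0 ≤ dfun t := fun t => le_trans (le_max_right _ _) (le_max_right _ _)
    have hdzero : ∀ t ∈ Icc aa bb, dfun t = 0 := by
      intro t ht
      have h1 : aa - t ≤ 0 := by linarith [ht.1]
      have h2 : t - bb ≤ 0 := by linarith [ht.2]
      simp only [hdfun]
      rw [max_eq_right h2, max_eq_right h1]
    have hdpos : ∀ t, t ∉ Icc aa bb → 0 < dfun t := by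
      intro t ht
      rw [mem_Icc, not_and_or] at ht
      rcases ht with h | h
      · push_neg at h
        exact lt_max_of_lt_left (by linarith)
      · push_neg at h
        exact lt_max_of_lt_right (lt_max_of_lt_left (by linarith))
    set ψ : ℕ → ℝ → ℝ := fun n t => ρa * (cc - (1 + cc) * min 1 ((n:ℝ) * dfun t)) with hψ
    have hmin0 : ∀ (n : ℕ) (t : ℝ), 0 ≤ min 1 ((n:ℝ) * dfun t) :=
      fun n t => le_min zero_le_one (mul_nonneg (Nat.cast_nonneg n) (hdnn t))
    have hmin1 : ∀ (n : ℕ) (t : ℝ), min 1 ((n:ℝ) * dfun t) ≤ 1 := fun n t => min_le_left _ _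
    have hψcont : ∀ n, Continuous (ψ n) := fun n =>
      continuous_const.mul (continuous_const.sub (continuous_const.mul
        (continuous_const.min (continuous_const.mul hdcont))))
    have hψbd : ∀ (n : ℕ) (t : ℝ), |ψ n t| ≤ ρa := by
      intro n t
      have hm0 := hmin0 n t
      have hm1 := hmin1 n t
      have habs : |cc - (1 + cc) * min 1 ((n:ℝ) * dfun t)| ≤ 1 := by
        rw [abs_le]; constructor <;> nlinarith
      calc |ψ n t| = ρa * |cc - (1 + cc) * min 1 ((n:ℝ) * dfun t)| := by
            rw [hψ]; rw [abs_mul, abs_of_pos hρa]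
      _ ≤ ρa * 1 := mul_le_mul_of_nonneg_left habs hρa.le
      _ = ρa := mul_one _
    have hψIab : ∀ (n : ℕ), ∀ t ∈ Icc aa bb, ψ n t = cc * ρa := by
      intro n t ht
      rw [hψ]
      simp only [hdzero t ht, mul_zero, min_eq_right (zero_le_one' ℝ)]
      ring
    have hψint : ∀ᶠ n : ℕ in Filter.atTop, 0 ≤ ∫ t, ψ n t ∂A := by
      have h2 : Filter.Tendsto (fun n : ℕ => (n:ℝ) * dfun t₁) Filter.atTop Filter.atTop :=
        (tendsto_natCast_atTop_atTop (R := ℝ)).atTop_mul_const (hdpos t₁ ht₁n)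
      filter_upwards [h2.eventually_ge_atTop 1] with n hn
      have ht₁v : ψ n t₁ = -ρa := by
        rw [hψ]
        simp only [min_eq_left hn]
        ring
      refine htest (ψ n) (hψcont n) ?_ ?_ (fun t _ => hψbd n t)
      · exact nrm_eq (fun t _ => hψbd n t) ⟨t₁, ht₁, by rw [ht₁v, abs_neg, abs_of_pos hρa]⟩
      · exact le_minOn habb (fun t ht => le_of_eq (hψIab n t ht).symm)
    set L : ℝ → ℝ := fun t => if t ∈ Icc aa bb then cc * ρa else -ρa with hL
    have hLtend : ∀ t : ℝ, Filter.Tendsto (fun n : ℕ => ψ n t) Filter.atTop (nhds (L t)) := by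
      intro t
      by_cases ht : t ∈ Icc aa bb
      · simp only [hL, if_pos ht]
        exact Filter.Tendsto.congr (fun n => (hψIab n t ht).symm) tendsto_const_nhds
      · simp only [hL, if_neg ht]
        have h2 : Filter.Tendsto (fun n : ℕ => (n:ℝ) * dfun t) Filter.atTop Filter.atTop :=
          (tendsto_natCast_atTop_atTop (R := ℝ)).atTop_mul_const (hdpos t ht)
        have hev : ∀ᶠ n : ℕ in Filter.atTop, ψ n t = -ρa := by
          filter_upwards [h2.eventually_ge_atTop 1] with n hn
          rw [hψ]
          simp only [min_eq_left hn]
          ring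
        exact Filter.Tendsto.congr' (hev.mono fun n h => h.symm) tendsto_const_nhds
    have hDCT := MeasureTheory.tendsto_integral_of_dominated_convergence
      (μ := A) (F := fun n => ψ n) (f := L) (bound := fun _ => ρa)
      (fun n => (hψcont n).aestronglyMeasurable) (integrable_const ρa)
      (fun n => Filter.Eventually.of_forall fun t => by
        rw [Real.norm_eq_abs]; exact hψbd n t)
      (Filter.Eventually.of_forall hLtend)
    have hL0 : 0 ≤ ∫ t, L t ∂A := ge_of_tendsto hDCT hψint
    -- compute the integral of L
    have hmem : ∀ᵐ t ∂A, t ∈ Icc (0:ℝ) 1 := by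
      have h : {t : ℝ | ¬ t ∈ Icc (0:ℝ) 1} = (Icc (0:ℝ) 1)ᶜ := rfl
      rw [ae_iff, h, hsupp]
    have hres : A.restrict (Icc (0:ℝ) 1) = A := Measure.restrict_eq_self_of_ae_mem hmem
    have hsub : Icc aa bb ⊆ Icc (0:ℝ) 1 := fun t ht => ⟨le_trans haa ht.1, le_trans ht.2 hbb⟩
    have hLint : Integrable L A := by
      refine Integrable.mono' (integrable_const ρa)
        ((Measurable.ite measurableSet_Icc measurable_const
          measurable_const).aestronglyMeasurable) ?_
      refine Filter.Eventually.of_forall fun t => ?_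
      simp only [Real.norm_eq_abs, hL]
      by_cases ht : t ∈ Icc aa bb
      · rw [if_pos ht, abs_of_nonneg (mul_nonneg hcc.le hρa.le)]
        nlinarith
      · rw [if_neg ht, abs_neg, abs_of_pos hρa]
    have hsplit : ∫ t, L t ∂A =
        (∫ t in Icc aa bb, L t ∂A) + ∫ t in Icc (0:ℝ) 1 \ Icc aa bb, L t ∂A := by
      calc ∫ t, L t ∂A = ∫ t in Icc (0:ℝ) 1, L t ∂A := by rw [hres]
      _ = ∫ t in Icc aa bb ∪ (Icc (0:ℝ) 1 \ Icc aa bb), L t ∂A := by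
          rw [Set.union_diff_cancel hsub]
      _ = (∫ t in Icc aa bb, L t ∂A) + ∫ t in Icc (0:ℝ) 1 \ Icc aa bb, L t ∂A :=
          setIntegral_union disjoint_sdiff_self_right
            (measurableSet_Icc.diff measurableSet_Icc) hLint.integrableOn hLint.integrableOn
    have hin : ∫ t in Icc aa bb, L t ∂A = cc * ρa * (A (Icc aa bb)).toReal := by
      rw [setIntegral_congr_fun measurableSet_Icc
        (fun t ht => by simp only [hL]; exact if_pos ht : EqOn L (fun _ => cc * ρa) (Icc aa bb)),
        setIntegral_const, smul_eq_mul, mul_comm, measureReal_def]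
    have hout : ∫ t in Icc (0:ℝ) 1 \ Icc aa bb, L t ∂A =
        -ρa * (A (Icc (0:ℝ) 1 \ Icc aa bb)).toReal := by
      rw [setIntegral_congr_fun (measurableSet_Icc.diff measurableSet_Icc)
        (fun t ht => by simp only [hL]; exact if_neg ht.2 : EqOn L (fun _ => -ρa)
          (Icc (0:ℝ) 1 \ Icc aa bb)),
        setIntegral_const, smul_eq_mul, mul_comm, measureReal_def]
    rw [hsplit, hin, hout] at hL0
    nlinarith [hL0]


open Classical in
lemma carath_q (f : ℝ → ℝ → ℝ → ℝ)
    (hf_meas : ∀ x y : ℝ, Measurable (fun t => f t x y))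
    (hf_cont : ∀ᵐ t ∂(volume.restrict (Icc (0:ℝ) 1)),
      Continuous (fun p : ℝ × ℝ => f t p.1 p.2))
    (u v : ℝ → ℝ) (hu : Continuous u) (hv : Continuous v) :
    ∃ q : ℝ → ℝ, StronglyMeasurable q ∧
      ∀ᵐ t ∂(volume.restrict (Icc (0:ℝ) 1)), q t = f t (u t) (v t) := by
  rw [ae_iff] at hf_cont
  obtain ⟨N, hsub, hNm, hN0⟩ := exists_measurable_superset_of_null hf_cont
  set F : ℝ × ℝ → ℝ → ℝ := fun p t => if t ∈ N then 0 else f t p.1 p.2 with hF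
  have hSM : ∀ p : ℝ × ℝ, StronglyMeasurable (F p) := by
    intro p
    have h1 : Measurable fun t => if t ∈ N then (0:ℝ) else f t p.1 p.2 :=
      Measurable.ite hNm measurable_const (hf_meas p.1 p.2)
    exact h1.stronglyMeasurable
  have hcont : ∀ t : ℝ, Continuous fun p : ℝ × ℝ => F p t := by
    intro t
    by_cases ht : t ∈ N
    · simp only [hF, if_pos ht]; exact continuous_const
    · simp only [hF, if_neg ht]
      by_contra hc
      exact ht (hsub hc)
  have hjoint : StronglyMeasurable (Function.uncurry F) :=
    stronglyMeasurable_uncurry_of_continuous_of_stronglyMeasurable hcont hSM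
  refine ⟨fun t => F (u t, v t) t, ?_, ?_⟩
  · exact hjoint.comp_measurable ((hu.prodMk hv).prodMk continuous_id).measurable
  · have hNae : ∀ᵐ t ∂(volume.restrict (Icc (0:ℝ) 1)), t ∉ N := by
      rw [ae_iff]
      simpa using hN0
    filter_upwards [hNae] with t ht
    simp only [hF, if_neg ht]

lemma integral_extIcc (A : Measure ℝ) (hsupp : A ((Icc (0:ℝ) 1)ᶜ) = 0) (w : ℝ → ℝ) :
    ∫ t, extIcc w t ∂A = ∫ t, w t ∂A := by
  refine integral_congr_ae ?_
  have hmem : ∀ᵐ t ∂A, t ∈ Icc (0:ℝ) 1 := by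
    have h : {t : ℝ | ¬ t ∈ Icc (0:ℝ) 1} = (Icc (0:ℝ) 1)ᶜ := rfl
    rw [ae_iff, h, hsupp]
  exact hmem.mono fun t ht => extIcc_eq w ht

theorem stmt11
    (k : Fin 2 → ℝ → ℝ → ℝ) (g : Fin 2 → ℝ → ℝ) (f : Fin 2 → ℝ → ℝ → ℝ → ℝ)
    (γ : Fin 2 → Fin 2 → ℝ → ℝ) (H : Fin 2 → Fin 2 → (ℝ → ℝ) → (ℝ → ℝ) → ℝ)
    (a b : Fin 2 → ℝ) (Φ : Fin 2 → ℝ → ℝ) (ct : Fin 2 → ℝ) (cγ : Fin 2 → Fin 2 → ℝ)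
    (c : Fin 2 → ℝ) (K : Set ((ℝ → ℝ) × (ℝ → ℝ)))
    (hf_meas : ∀ i (x y : ℝ), Measurable (fun t => f i t x y))
    (hf_cont : ∀ i, ∀ᵐ t ∂(volume.restrict (Icc (0:ℝ) 1)),
      Continuous (fun p : ℝ × ℝ => f i t p.1 p.2))
    (hf_nonneg : ∀ i t x y, 0 ≤ f i t x y)
    (hf_bdd : ∀ i, ∀ r > 0, ∃ C, ∀ᵐ t ∂(volume.restrict (Icc (0:ℝ) 1)),
      ∀ x ∈ Icc (-r) r, ∀ y ∈ Icc (-r) r, f i t x y ≤ C)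
    (hk_meas : ∀ i, Measurable (Function.uncurry (k i)))
    (hk_cont : ∀ i, ∀ τ ∈ Icc (0:ℝ) 1, ∀ᵐ s ∂(volume.restrict (Icc (0:ℝ) 1)),
      Filter.Tendsto (fun t => |k i t s - k i τ s|) (nhdsWithin τ (Icc (0:ℝ) 1)) (nhds 0))
    (hab : ∀ i, 0 ≤ a i ∧ a i ≤ b i ∧ b i ≤ 1)
    (hΦ_meas : ∀ i, Measurable (Φ i))
    (hΦ_bdd : ∀ i, ∃ C, ∀ᵐ s ∂(volume.restrict (Icc (0:ℝ) 1)), |Φ i s| ≤ C)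
    (hct : ∀ i, ct i ∈ Ioc (0:ℝ) 1)
    (hkΦ_abs : ∀ i, ∀ t ∈ Icc (0:ℝ) 1, ∀ᵐ s ∂(volume.restrict (Icc (0:ℝ) 1)),
      |k i t s| ≤ Φ i s)
    (hkΦ_low : ∀ i, ∀ t ∈ Icc (a i) (b i), ∀ᵐ s ∂(volume.restrict (Icc (0:ℝ) 1)),
      ct i * Φ i s ≤ k i t s)
    (hg_meas : ∀ i, Measurable (g i))
    (hg_nonneg : ∀ i, ∀ᵐ s ∂(volume.restrict (Icc (0:ℝ) 1)), 0 ≤ g i s)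
    (hgΦ_int : ∀ i, IntegrableOn (fun s => g i s * Φ i s) (Icc (0:ℝ) 1))
    (hΦg_pos : ∀ i, 0 < ∫ s in (a i)..(b i), Φ i s * g i s)
    (hγ_cont : ∀ i j, ContinuousOn (γ i j) (Icc (0:ℝ) 1))
    (hcγ : ∀ i j, cγ i j ∈ Ioc (0:ℝ) 1)
    (hγ_low : ∀ i j, ∀ t ∈ Icc (a i) (b i), cγ i j * nrm (γ i j) ≤ γ i j t)
    (hc : ∀ i, c i = min (ct i) (min (cγ i 0) (cγ i 1)))
    (hK : K = {w : (ℝ → ℝ) × (ℝ → ℝ) |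
      (ContinuousOn w.1 (Icc (0:ℝ) 1) ∧ c 0 * nrm w.1 ≤ minOnIcc w.1 (a 0) (b 0)) ∧
      (ContinuousOn w.2 (Icc (0:ℝ) 1) ∧ c 1 * nrm w.2 ≤ minOnIcc w.2 (a 1) (b 1))})
    (hH_nonneg : ∀ i j, ∀ w ∈ K, 0 ≤ H i j w.1 w.2)
    (hH_cont : ∀ i j, ∀ w ∈ K, ∀ ε > 0, ∃ δ > 0, ∀ w' ∈ K,
      max (nrm (fun t => w.1 t - w'.1 t)) (nrm (fun t => w.2 t - w'.2 t)) < δ →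
      |H i j w.1 w.2 - H i j w'.1 w'.2| < ε)
    (hH_bdd : ∀ i j, ∀ M : ℝ, ∃ M', ∀ w ∈ K, max (nrm w.1) (nrm w.2) ≤ M → H i j w.1 w.2 ≤ M')
    (ρ : Fin 2 → ℝ) (hρ : ∀ i, 0 < ρ i) (hI1 : CondI1sys k g f γ H K ρ) :
    ∀ w ∈ K, ((nrm w.1 = ρ 0 ∧ nrm w.2 ≤ ρ 1) ∨ (nrm w.2 = ρ 1 ∧ nrm w.1 ≤ ρ 0)) →
      ∀ μc : ℝ, 1 ≤ μc →
      ¬ (∀ t ∈ Icc (0:ℝ) 1, μc * w.1 t = Tsys k g f γ H 0 w.1 w.2 t ∧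
        μc * w.2 t = Tsys k g f γ H 1 w.1 w.2 t) := by
  intro w hw hbdry μc hμc hEq
  obtain ⟨μm, hμprops, hγlt, hDposc, hHbound, fb, hfb, hcond⟩ := hI1
  rw [hK] at hw
  obtain ⟨⟨hw1c, hw1m⟩, hw2c, hw2m⟩ := hw
  have hwK : w ∈ K := by
    rw [hK]; exact ⟨⟨hw1c, hw1m⟩, hw2c, hw2m⟩
  -- constants
  have hcpos : ∀ i, 0 < c i := fun i => by
    rw [hc i]; exact lt_min (hct i).1 (lt_min (hcγ i 0).1 (hcγ i 1).1)
  have hcle1 : ∀ i, c i ≤ 1 := fun i => by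
    rw [hc i]; exact le_trans (min_le_left _ _) (hct i).2
  have hclect : ∀ i, c i ≤ ct i := fun i => by rw [hc i]; exact min_le_left _ _
  have hclecγ : ∀ i j, c i ≤ cγ i j := by
    intro i j
    rw [hc i]
    refine le_trans (min_le_right _ _) ?_
    fin_cases j
    · exact min_le_left _ _
    · exact min_le_right _ _
  have hΦnn : ∀ i, ∀ᵐ s ∂(volume.restrict (Icc (0:ℝ) 1)), 0 ≤ Φ i s := fun i => by
    filter_upwards [hkΦ_abs i 0 (by norm_num)] with s hs using le_trans (abs_nonneg _) hs
  -- extensions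
  have hu1c : Continuous (extIcc w.1) := extIcc_cont hw1c
  have hu2c : Continuous (extIcc w.2) := extIcc_cont hw2c
  have hγEc : ∀ i j, Continuous (extIcc (γ i j)) := fun i j => extIcc_cont (hγ_cont i j)
  have hγbd : ∀ i j, ∀ t ∈ Icc (0:ℝ) 1, |extIcc (γ i j) t| ≤ nrm (γ i j) := by
    intro i j t ht
    rw [extIcc_eq _ ht]
    exact nrm_ge (hγ_cont i j) ht
  have hγnn : ∀ i j, 0 ≤ nrm (γ i j) := fun i j => nrm_nonneg (hγ_cont i j)
  have hγlowE : ∀ i j, ∀ t ∈ Icc (a i) (b i), c i * nrm (γ i j) ≤ extIcc (γ i j) t := by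
    intro i j t ht
    have htm : t ∈ Icc (0:ℝ) 1 :=
      ⟨le_trans (hab i).1 ht.1, le_trans ht.2 (hab i).2.2⟩
    rw [extIcc_eq _ htm]
    refine le_trans ?_ (hγ_low i j t ht)
    exact mul_le_mul_of_nonneg_right (hclecγ i j) (hγnn i j)
  have hklE : ∀ i, ∀ t ∈ Icc (a i) (b i),
      ∀ᵐ s ∂(volume.restrict (Icc (0:ℝ) 1)), c i * Φ i s ≤ k i t s := by
    intro i t ht
    filter_upwards [hkΦ_low i t ht, hΦnn i] with s h1 h2
    exact le_trans (mul_le_mul_of_nonneg_right (hclect i) h2) h1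
  -- measure instances and support
  haveI hFM000 : IsFiniteMeasure (μm 0 0 0) := (hμprops 0 0 0).1
  haveI hFM001 : IsFiniteMeasure (μm 0 0 1) := (hμprops 0 0 1).1
  haveI hFM010 : IsFiniteMeasure (μm 0 1 0) := (hμprops 0 1 0).1
  haveI hFM011 : IsFiniteMeasure (μm 0 1 1) := (hμprops 0 1 1).1
  haveI hFM100 : IsFiniteMeasure (μm 1 0 0) := (hμprops 1 0 0).1
  haveI hFM101 : IsFiniteMeasure (μm 1 0 1) := (hμprops 1 0 1).1
  haveI hFM110 : IsFiniteMeasure (μm 1 1 0) := (hμprops 1 1 0).1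
  haveI hFM111 : IsFiniteMeasure (μm 1 1 1) := (hμprops 1 1 1).1
  -- measurable representatives of the superposition
  obtain ⟨q0, hq0SM, hq0ae⟩ := carath_q (f 0) (hf_meas 0) (hf_cont 0)
    (extIcc w.1) (extIcc w.2) hu1c hu2c
  obtain ⟨q1, hq1SM, hq1ae⟩ := carath_q (f 1) (hf_meas 1) (hf_cont 1)
    (extIcc w.1) (extIcc w.2) hu1c hu2c
  have hq0ae' : ∀ᵐ s ∂(volume.restrict (Icc (0:ℝ) 1)), q0 s = f 0 s (w.1 s) (w.2 s) := by
    filter_upwards [hq0ae, ae_restrict_mem measurableSet_Icc] with s h1 h2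
    rw [h1, extIcc_eq _ h2, extIcc_eq _ h2]
  have hq1ae' : ∀ᵐ s ∂(volume.restrict (Icc (0:ℝ) 1)), q1 s = f 1 s (w.1 s) (w.2 s) := by
    filter_upwards [hq1ae, ae_restrict_mem measurableSet_Icc] with s h1 h2
    rw [h1, extIcc_eq _ h2, extIcc_eq _ h2]
  have hq0nn : ∀ᵐ s ∂(volume.restrict (Icc (0:ℝ) 1)), 0 ≤ q0 s := by
    filter_upwards [hq0ae'] with s h1 using h1 ▸ hf_nonneg 0 s _ _
  have hq1nn : ∀ᵐ s ∂(volume.restrict (Icc (0:ℝ) 1)), 0 ≤ q1 s := by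
    filter_upwards [hq1ae'] with s h1 using h1 ▸ hf_nonneg 1 s _ _
  -- interval-integral congruence in the equations
  have hint_eq : ∀ (i : Fin 2) (qi : ℝ → ℝ),
      (∀ᵐ s ∂(volume.restrict (Icc (0:ℝ) 1)), qi s = f i s (w.1 s) (w.2 s)) →
      ∀ t : ℝ, (∫ s in (0:ℝ)..1, k i t s * g i s * f i s (w.1 s) (w.2 s)) =
        ∫ s in (0:ℝ)..1, k i t s * g i s * qi s := by
    intro i qi hqi t
    rw [intervalIntegral.integral_of_le zero_le_one,
      intervalIntegral.integral_of_le zero_le_one]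
    refine integral_congr_ae ?_
    filter_upwards [ae_restrict_of_ae_restrict_of_subset Ioc_subset_Icc_self hqi]
      with s h1
    rw [h1]
  have hsub0 : Icc (a 0) (b 0) ⊆ Icc (0:ℝ) 1 :=
    fun t ht => ⟨le_trans (hab 0).1 ht.1, le_trans ht.2 (hab 0).2.2⟩
  have hsub1 : Icc (a 1) (b 1) ⊆ Icc (0:ℝ) 1 :=
    fun t ht => ⟨le_trans (hab 1).1 ht.1, le_trans ht.2 (hab 1).2.2⟩
  rcases hbdry with ⟨hnu, hnv⟩ | ⟨hnv, hnu⟩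
  -- CASE 1 : the first component has norm ρ 0
  · have hmassA : ∀ j : Fin 2, (μm 0 j 0 (Icc (0:ℝ) 1 \ Icc (a 0) (b 0))).toReal ≤
        c 0 * (μm 0 j 0 (Icc (a 0) (b 0))).toReal := by
      intro j
      haveI : IsFiniteMeasure (μm 0 j 0) := (hμprops 0 j 0).1
      refine mass_aux (μm 0 j 0) (hab 0).1 (hab 0).2.1 (hab 0).2.2 (hcpos 0) (hcle1 0)
        (hρ 0) (hμprops 0 j 0).2 ?_
      intro uT hcontT hnrmT hminT hbdT
      have hwT : ((uT, (fun _ : ℝ => (0:ℝ))) : (ℝ → ℝ) × (ℝ → ℝ)) ∈ K := by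
        rw [hK]
        refine ⟨⟨hcontT.continuousOn, ?_⟩, continuous_const.continuousOn, ?_⟩
        · rw [hnrmT]; exact hminT
        · rw [nrm_zero, minOn_zero (hab 1).2.1]; simp
      have hb2 := hHbound 0 j _ hwT (Or.inl ⟨hnrmT, by rw [nrm_zero]; exact (hρ 1).le⟩)
      have hnn := hH_nonneg 0 j _ hwT
      have hz : (∫ t, (fun _ : ℝ => (0:ℝ)) t ∂(μm 0 j 1)) = 0 := by simp
      simp only at hb2
      rw [hz] at hb2
      linarith
    have hq0bd : ∀ᵐ s ∂(volume.restrict (Icc (0:ℝ) 1)), q0 s ≤ fb 0 * ρ 0 := by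
      filter_upwards [hq0ae', hfb 0, ae_restrict_mem measurableSet_Icc] with s h1 h2 h3
      rw [h1]
      refine h2 (w.1 s) ?_ (w.2 s) ?_
      · rw [mem_Icc, ← abs_le, ← hnu]; exact nrm_ge hw1c h3
      · rw [mem_Icc, ← abs_le]; exact le_trans (nrm_ge hw2c h3) hnv
    have heq0 : ∀ t ∈ Icc (0:ℝ) 1, μc * extIcc w.1 t =
        extIcc (γ 0 0) t * (H 0 0 w.1 w.2) + extIcc (γ 0 1) t * (H 0 1 w.1 w.2) +
        ∫ s in (0:ℝ)..1, k 0 t s * g 0 s * q0 s := by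
      intro t ht
      have e := (hEq t ht).1
      rw [Tsys] at e
      rw [extIcc_eq _ ht, extIcc_eq _ ht, extIcc_eq _ ht, e, hint_eq 0 q0 hq0ae' t]
    obtain ⟨t0, ht0m, ht0v⟩ := nrm_exists_max hw1c
    have hc' := hcond 0 1 (by decide)
    simp only at hc'
    refine aux_main (k 0) (g 0) (Φ 0) q0 (extIcc w.1) (extIcc w.2)
      (extIcc (γ 0 0)) (extIcc (γ 0 1))
      (H 0 0 w.1 w.2) (H 0 1 w.1 w.2) (fb 0) (ρ 0) (ρ 1) μc (a 0) (b 0) (c 0)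
      (nrm (γ 0 0)) (nrm (γ 0 1)) (μm 0 0 0) (μm 0 1 0) (μm 0 0 1) (μm 0 1 1)
      (hμprops 0 0 0).2 (hμprops 0 1 0).2 (hμprops 0 0 1).2 (hμprops 0 1 1).2
      hμc (hρ 0) (hρ 1).le (hab 0).1 (hab 0).2.1 (hab 0).2.2 (hcpos 0)
      (hmassA 0) (hmassA 1) (hk_meas 0) (hΦ_meas 0) (hg_meas 0) (hg_nonneg 0)
      (hgΦ_int 0) (hkΦ_abs 0) (hklE 0) hq0SM hq0nn hq0bd
      hu1c ?_ ?_ ?_ hu2c ?_ (hγEc 0 0) (hγEc 0 1) (hγnn 0 0) (hγnn 0 1)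
      (hγbd 0 0) (hγbd 0 1) (hγlowE 0 0) (hγlowE 0 1)
      (hH_nonneg 0 0 w hwK) (hH_nonneg 0 1 w hwK) ?_ ?_ heq0
      ?_ ?_ ?_ ?_ rfl rfl rfl rfl rfl rfl
      (hγlt 0 0 0) (hγlt 0 1 0) (hDposc 0) hc'
    · intro t ht
      rw [extIcc_eq _ ht, ← hnu]
      exact nrm_ge hw1c ht
    · intro t ht
      rw [extIcc_eq _ (hsub0 ht)]
      calc c 0 * ρ 0 = c 0 * nrm w.1 := by rw [hnu]
      _ ≤ minOnIcc w.1 (a 0) (b 0) := hw1m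
      _ ≤ w.1 t := minOn_le (hw1c.mono hsub0) ht
    · exact ⟨t0, ht0m, by rw [extIcc_eq _ ht0m, ht0v, hnu]⟩
    · intro t ht
      rw [extIcc_eq _ ht]
      exact le_trans (nrm_ge hw2c ht) hnv
    · have hb2 := hHbound 0 0 w hwK (Or.inl ⟨hnu, hnv⟩)
      rwa [← integral_extIcc (μm 0 0 0) (hμprops 0 0 0).2 w.1,
        ← integral_extIcc (μm 0 0 1) (hμprops 0 0 1).2 w.2] at hb2
    · have hb2 := hHbound 0 1 w hwK (Or.inl ⟨hnu, hnv⟩)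
      rwa [← integral_extIcc (μm 0 1 0) (hμprops 0 1 0).2 w.1,
        ← integral_extIcc (μm 0 1 1) (hμprops 0 1 1).2 w.2] at hb2
    · exact (integral_extIcc (μm 0 0 0) (hμprops 0 0 0).2 (γ 0 0)).symm
    · exact (integral_extIcc (μm 0 0 0) (hμprops 0 0 0).2 (γ 0 1)).symm
    · exact (integral_extIcc (μm 0 1 0) (hμprops 0 1 0).2 (γ 0 0)).symm
    · exact (integral_extIcc (μm 0 1 0) (hμprops 0 1 0).2 (γ 0 1)).symm
  -- CASE 2 : the second component has norm ρ 1
  · have hmassA : ∀ j : Fin 2, (μm 1 j 1 (Icc (0:ℝ) 1 \ Icc (a 1) (b 1))).toReal ≤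
        c 1 * (μm 1 j 1 (Icc (a 1) (b 1))).toReal := by
      intro j
      haveI : IsFiniteMeasure (μm 1 j 1) := (hμprops 1 j 1).1
      refine mass_aux (μm 1 j 1) (hab 1).1 (hab 1).2.1 (hab 1).2.2 (hcpos 1) (hcle1 1)
        (hρ 1) (hμprops 1 j 1).2 ?_
      intro uT hcontT hnrmT hminT hbdT
      have hwT : (((fun _ : ℝ => (0:ℝ)), uT) : (ℝ → ℝ) × (ℝ → ℝ)) ∈ K := by
        rw [hK]
        refine ⟨⟨continuous_const.continuousOn, ?_⟩, hcontT.continuousOn, ?_⟩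
        · rw [nrm_zero, minOn_zero (hab 0).2.1]; simp
        · rw [hnrmT]; exact hminT
      have hb2 := hHbound 1 j _ hwT (Or.inr ⟨hnrmT, by rw [nrm_zero]; exact (hρ 0).le⟩)
      have hnn := hH_nonneg 1 j _ hwT
      have hz : (∫ t, (fun _ : ℝ => (0:ℝ)) t ∂(μm 1 j 0)) = 0 := by simp
      simp only at hb2
      rw [hz] at hb2
      linarith
    have hq1bd : ∀ᵐ s ∂(volume.restrict (Icc (0:ℝ) 1)), q1 s ≤ fb 1 * ρ 1 := by
      filter_upwards [hq1ae', hfb 1, ae_restrict_mem measurableSet_Icc] with s h1 h2 h3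
      rw [h1]
      refine h2 (w.1 s) ?_ (w.2 s) ?_
      · rw [mem_Icc, ← abs_le]; exact le_trans (nrm_ge hw1c h3) hnu
      · rw [mem_Icc, ← abs_le, ← hnv]; exact nrm_ge hw2c h3
    have heq1 : ∀ t ∈ Icc (0:ℝ) 1, μc * extIcc w.2 t =
        extIcc (γ 1 0) t * (H 1 0 w.1 w.2) + extIcc (γ 1 1) t * (H 1 1 w.1 w.2) +
        ∫ s in (0:ℝ)..1, k 1 t s * g 1 s * q1 s := by
      intro t ht
      have e := (hEq t ht).2
      rw [Tsys] at e
      rw [extIcc_eq _ ht, extIcc_eq _ ht, extIcc_eq _ ht, e, hint_eq 1 q1 hq1ae' t]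
    obtain ⟨t0, ht0m, ht0v⟩ := nrm_exists_max hw2c
    have hc' := hcond 1 0 (by decide)
    simp only at hc'
    refine aux_main (k 1) (g 1) (Φ 1) q1 (extIcc w.2) (extIcc w.1)
      (extIcc (γ 1 0)) (extIcc (γ 1 1))
      (H 1 0 w.1 w.2) (H 1 1 w.1 w.2) (fb 1) (ρ 1) (ρ 0) μc (a 1) (b 1) (c 1)
      (nrm (γ 1 0)) (nrm (γ 1 1)) (μm 1 0 1) (μm 1 1 1) (μm 1 0 0) (μm 1 1 0)
      (hμprops 1 0 1).2 (hμprops 1 1 1).2 (hμprops 1 0 0).2 (hμprops 1 1 0).2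
      hμc (hρ 1) (hρ 0).le (hab 1).1 (hab 1).2.1 (hab 1).2.2 (hcpos 1)
      (hmassA 0) (hmassA 1) (hk_meas 1) (hΦ_meas 1) (hg_meas 1) (hg_nonneg 1)
      (hgΦ_int 1) (hkΦ_abs 1) (hklE 1) hq1SM hq1nn hq1bd
      hu2c ?_ ?_ ?_ hu1c ?_ (hγEc 1 0) (hγEc 1 1) (hγnn 1 0) (hγnn 1 1)
      (hγbd 1 0) (hγbd 1 1) (hγlowE 1 0) (hγlowE 1 1)
      (hH_nonneg 1 0 w hwK) (hH_nonneg 1 1 w hwK) ?_ ?_ heq1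
      ?_ ?_ ?_ ?_ rfl rfl rfl rfl rfl rfl
      (hγlt 1 0 1) (hγlt 1 1 1) (hDposc 1) hc'
    · intro t ht
      rw [extIcc_eq _ ht, ← hnv]
      exact nrm_ge hw2c ht
    · intro t ht
      rw [extIcc_eq _ (hsub1 ht)]
      calc c 1 * ρ 1 = c 1 * nrm w.2 := by rw [hnv]
      _ ≤ minOnIcc w.2 (a 1) (b 1) := hw2m
      _ ≤ w.2 t := minOn_le (hw2c.mono hsub1) ht
    · exact ⟨t0, ht0m, by rw [extIcc_eq _ ht0m, ht0v, hnv]⟩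
    · intro t ht
      rw [extIcc_eq _ ht]
      exact le_trans (nrm_ge hw1c ht) hnu
    · have hb2 := hHbound 1 0 w hwK (Or.inr ⟨hnv, hnu⟩)
      rw [← integral_extIcc (μm 1 0 0) (hμprops 1 0 0).2 w.1,
        ← integral_extIcc (μm 1 0 1) (hμprops 1 0 1).2 w.2] at hb2
      rw [add_comm] at hb2
      exact hb2
    · have hb2 := hHbound 1 1 w hwK (Or.inr ⟨hnv, hnu⟩)
      rw [← integral_extIcc (μm 1 1 0) (hμprops 1 1 0).2 w.1,
        ← integral_extIcc (μm 1 1 1) (hμprops 1 1 1).2 w.2] at hb2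
      rw [add_comm] at hb2
      exact hb2
    · exact (integral_extIcc (μm 1 0 1) (hμprops 1 0 1).2 (γ 1 0)).symm
    · exact (integral_extIcc (μm 1 0 1) (hμprops 1 0 1).2 (γ 1 1)).symm
    · exact (integral_extIcc (μm 1 1 1) (hμprops 1 1 1).2 (γ 1 0)).symm
    · exact (integral_extIcc (μm 1 1 1) (hμprops 1 1 1).2 (γ 1 1)).symm
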